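/- Let k ≥ 3 and α ∈ ℝ^k. For each surjection σ : [k] → [m] define (σα)_j = Σ_{i : σ(i)=j} α_i, and let Λ_{k,m}(x², α) = Σ_{σ : [k]↠[m]} Σ_{j=1}^m (σα)_j². Then Λ_k(x², α) := Σ_{m=1}^k ((-1)^{m-1}/m) Λ_{k,m}(x², α) = 0. -/

import Mathlib

open Finset Function

noncomputable def Ns (n m : ℕ) : ℕ := Nat.card {f : Fin n → Fin m // Surjective f}

lemma Ns_congr {A B A' B' : Type*} [Fintype A] [Fintype B] [Fintype A'] [Fintype B']
    (e : A ≃ A') (e' : B ≃ B') :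
    Nat.card {f : A → B // Surjective f} = Nat.card {f : A' → B' // Surjective f} := by
  apply Nat.card_congr
  refine (Equiv.arrowCongr e e').subtypeEquiv fun f => ?_
  constructor
  · rintro h b
    obtain ⟨a, ha⟩ := h (e'.symm b)
    exact ⟨e a, by simp [Equiv.arrowCongr, ha]⟩
  · rintro h b
    obtain ⟨a, ha⟩ := h (e' b)
    refine ⟨e.symm a, e'.injective ?_⟩
    simpa [Equiv.arrowCongr] using ha

lemma Ns_eq_card (n m : ℕ) [DecidablePred (Surjective : (Fin n → Fin m) → Prop)] :
    Ns n m = (univ.filter (fun f : Fin n → Fin m => Surjective f)).card := by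
  rw [Ns, Nat.card_eq_fintype_card, Fintype.card_subtype]

lemma Ns_zero_right (n : ℕ) (hn : 1 ≤ n) : Ns n 0 = 0 := by
  have : IsEmpty {f : Fin n → Fin 0 // Surjective f} :=
    ⟨fun f => (f.1 ⟨0, hn⟩).elim0⟩
  simp [Ns]

lemma Ns_eq_zero_of_lt {n m : ℕ} (h : n < m) : Ns n m = 0 := by
  have : IsEmpty {f : Fin n → Fin m // Surjective f} := by
    refine ⟨fun f => ?_⟩
    have := Fintype.card_le_of_surjective f.1 f.2
    simp at this; omega
  simp [Ns]
open Finset Function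

lemma cons_surj_iff {n m : ℕ} (a : Fin (m+1)) (g : Fin n → Fin (m+1)) :
    Surjective (Fin.cons a g) ↔ ∀ b, b = a ∨ ∃ x, g x = b := by
  constructor
  · intro h b
    obtain ⟨y, hy⟩ := h b
    induction y using Fin.cases with
    | zero => exact Or.inl (by simpa using hy.symm)
    | succ x => exact Or.inr ⟨x, by simpa using hy⟩
  · intro h b
    rcases h b with rfl | ⟨x, rfl⟩
    · exact ⟨0, Fin.cons_zero _ _⟩
    · exact ⟨x.succ, Fin.cons_succ _ _ _⟩

lemma surj_cons_of_surj {n m : ℕ} (a : Fin (m+1)) {g : Fin n → Fin (m+1)}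
    (hg : Surjective g) : Surjective (Fin.cons a g) := by
  rw [cons_surj_iff]; exact fun b => Or.inr (hg b)

lemma cons_surj_not_surj_iff {n m : ℕ} (a : Fin (m+1)) (g : Fin n → Fin (m+1)) :
    (Surjective (Fin.cons a g) ∧ ¬ Surjective g) ↔
      ((∀ b, b ≠ a → ∃ x, g x = b) ∧ ∀ x, g x ≠ a) := by
  rw [cons_surj_iff]
  constructor
  · rintro ⟨h1, h2⟩
    have hna : ∀ x, g x ≠ a := by
      intro x hx
      apply h2
      intro b
      rcases h1 b with rfl | hb
      · exact ⟨x, hx⟩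
      · exact hb
    refine ⟨fun b hb => ?_, hna⟩
    rcases h1 b with rfl | hb
    · exact absurd rfl hb
    · exact hb
  · rintro ⟨h1, h2⟩
    constructor
    · intro b
      by_cases hb : b = a
      · exact Or.inl hb
      · exact Or.inr (h1 b hb)
    · intro hs
      obtain ⟨x, hx⟩ := hs a
      exact h2 x hx

/-- bijection for the "exactly missing a" case -/
def missEquiv {n m : ℕ} (a : Fin (m+1)) :
    {g : Fin n → Fin (m+1) // (∀ b, b ≠ a → ∃ x, g x = b) ∧ ∀ x, g x ≠ a} ≃
      {h : Fin n → {b : Fin (m+1) // b ≠ a} // Surjective h} where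
  toFun g := ⟨fun x => ⟨g.1 x, g.2.2 x⟩, by
    rintro ⟨b, hb⟩
    obtain ⟨x, hx⟩ := g.2.1 b hb
    exact ⟨x, Subtype.ext hx⟩⟩
  invFun h := ⟨fun x => (h.1 x).1, by
    constructor
    · intro b hb
      obtain ⟨x, hx⟩ := h.2 ⟨b, hb⟩
      exact ⟨x, congrArg Subtype.val hx⟩
    · exact fun x => (h.1 x).2⟩
  left_inv g := rfl
  right_inv h := rfl

lemma Ns_fixed_val {n m : ℕ} (a : Fin (m+1)) :
    Nat.card {g : Fin n → Fin (m+1) // Surjective (Fin.cons a g)} =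
      Ns n (m+1) + Ns n m := by
  classical
  have hsplit : Nat.card {g : Fin n → Fin (m+1) // Surjective (Fin.cons a g)} =
      Nat.card {g : Fin n → Fin (m+1) // Surjective (Fin.cons a g) ∧ Surjective g} +
      Nat.card {g : Fin n → Fin (m+1) // Surjective (Fin.cons a g) ∧ ¬ Surjective g} := by
    rw [Nat.card_eq_fintype_card, Nat.card_eq_fintype_card, Nat.card_eq_fintype_card,
      Fintype.card_subtype, Fintype.card_subtype, Fintype.card_subtype,
      ← Finset.filter_filter, ← Finset.filter_filter]
    exact (Finset.card_filter_add_card_filter_not (s := Finset.univ.filter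
      (fun g : Fin n → Fin (m+1) => Surjective (Fin.cons a g)))
      (p := fun g => Surjective g)).symm
  rw [hsplit]
  congr 1
  · rw [Ns]
    exact Nat.card_congr (Equiv.subtypeEquivRight fun g =>
      ⟨fun h => h.2, fun h => ⟨surj_cons_of_surj a h, h⟩⟩)
  · have e1 : {g : Fin n → Fin (m+1) // Surjective (Fin.cons a g) ∧ ¬ Surjective g} ≃
        {h : Fin n → {b : Fin (m+1) // b ≠ a} // Surjective h} :=
      (Equiv.subtypeEquivRight fun g => cons_surj_not_surj_iff a g).trans (missEquiv a)
    have hcard : Fintype.card {b : Fin (m+1) // b ≠ a} = m := by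
      simp [Fintype.card_subtype_compl]
    rw [Ns]
    exact (Nat.card_congr e1).trans
      (Ns_congr (Equiv.refl _) (Fintype.equivFinOfCardEq hcard))

lemma Ns_rec (n m : ℕ) : Ns (n+1) (m+1) = (m+1) * (Ns n (m+1) + Ns n m) := by
  classical
  have e2 : {f : Fin (n+1) → Fin (m+1) // Surjective f} ≃
      Σ a : Fin (m+1), {g : Fin n → Fin (m+1) // Surjective (Fin.cons a g)} :=
    (Equiv.subtypeEquiv (Fin.consEquiv (fun _ : Fin (n+1) => Fin (m+1))).symm
      (fun f => Iff.of_eq (congrArg Surjective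
        ((Fin.consEquiv (fun _ : Fin (n+1) => Fin (m+1))).apply_symm_apply f).symm))).trans
      (Equiv.subtypeProdEquivSigmaSubtype fun a (g : Fin n → Fin (m+1)) =>
        Surjective (Fin.cons a g))
  rw [Ns, Nat.card_congr e2, Nat.card_eq_fintype_card, Fintype.card_sigma]
  simp only [← Nat.card_eq_fintype_card, Ns_fixed_val]
  simp [Finset.sum_const, mul_comm]

lemma sum_Icc_one_eq_range (F : ℕ → ℝ) (K : ℕ) :
    ∑ m ∈ Icc 1 K, F m = ∑ j ∈ range K, F (j+1) := by
  induction K with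
  | zero => simp
  | succ K ih =>
      rw [Finset.sum_range_succ, ← ih, Finset.sum_Icc_succ_top (by omega)]

lemma Ns_alt {n K : ℕ} (h2 : 2 ≤ n) (hK : n ≤ K) :
    ∑ m ∈ Icc 1 K, ((-1:ℝ)^(m-1)/m) * (Ns n m : ℝ) = 0 := by
  obtain ⟨n₀, rfl⟩ : ∃ n₀, n = n₀ + 1 := ⟨n - 1, by omega⟩
  obtain ⟨K', rfl⟩ : ∃ K', K = K' + 1 := ⟨K - 1, by omega⟩
  have hn₀ : 1 ≤ n₀ := by omega
  rw [sum_Icc_one_eq_range]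
  have hterm : ∀ j, ((-1:ℝ)^(j+1-1)/((j+1 : ℕ) : ℝ)) * (Ns (n₀+1) (j+1) : ℝ) =
      (-1:ℝ)^j * (Ns n₀ (j+1) : ℝ) + (-1:ℝ)^j * (Ns n₀ j : ℝ) := by
    intro j
    rw [Ns_rec n₀ j]
    simp only [Nat.add_sub_cancel]
    have hne : ((j:ℝ) + 1) ≠ 0 := by positivity
    push_cast
    field_simp
  rw [Finset.sum_congr rfl (fun j _ => hterm j)]
  rw [Finset.sum_add_distrib]
  have hf0 : ∑ j ∈ range (K'+1), (-1:ℝ)^j * (Ns n₀ j : ℝ) =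
      -∑ j ∈ range K', (-1:ℝ)^j * (Ns n₀ (j+1) : ℝ) := by
    rw [Finset.sum_range_succ']
    have h0 : ((-1:ℝ)^0 * (Ns n₀ 0 : ℝ)) = 0 := by simp [Ns_zero_right n₀ hn₀]
    rw [h0, add_zero, ← Finset.sum_neg_distrib]
    apply Finset.sum_congr rfl
    intro j _
    ring
  have hf1 : ∑ j ∈ range (K'+1), (-1:ℝ)^j * (Ns n₀ (j+1) : ℝ) =
      ∑ j ∈ range K', (-1:ℝ)^j * (Ns n₀ (j+1) : ℝ) := by
    rw [Finset.sum_range_succ, Ns_eq_zero_of_lt (by omega : n₀ < K' + 1)]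
    simp
  rw [hf0, hf1]
  ring

lemma Ns_def (n m : ℕ) : Ns n m = Nat.card {f : Fin n → Fin m // Surjective f} := rfl

lemma card_pair_ne {k m : ℕ} (i i' : Fin k) (h : i ≠ i') :
    Nat.card {σ : Fin k → Fin m // Surjective σ ∧ σ i' = σ i} = Ns (k-1) m := by
  have E : {σ : Fin k → Fin m // Surjective σ ∧ σ i' = σ i} ≃
      {τ : {x : Fin k // x ≠ i'} → Fin m // Surjective τ} := by
    refine ⟨fun σ => ⟨fun x => σ.1 x.1, ?_⟩, fun τ => ⟨fun x =>
      if hx : x = i' then τ.1 ⟨i, h⟩ else τ.1 ⟨x, hx⟩, ?_, ?_⟩, fun σ => ?_, fun τ => ?_⟩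
    · intro b
      obtain ⟨y, hy⟩ := σ.2.1 b
      by_cases hyi : y = i'
      · refine ⟨⟨i, h⟩, ?_⟩
        show σ.1 i = b
        exact σ.2.2.symm.trans (hyi ▸ hy)
      · exact ⟨⟨y, hyi⟩, hy⟩
    · intro b
      obtain ⟨x, hx⟩ := τ.2 b
      refine ⟨x.1, ?_⟩
      show dite _ _ _ = b
      rw [dif_neg x.2]
      exact hx
    · show dite _ _ _ = dite _ _ _
      rw [dif_pos rfl, dif_neg h]
    · refine Subtype.ext (funext fun x => ?_)
      show dite _ _ _ = σ.1 x
      by_cases hx : x = i'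
      · subst hx
        rw [dif_pos rfl]
        exact σ.2.2.symm
      · rw [dif_neg hx]
    · refine Subtype.ext (funext fun x => ?_)
      show dite _ _ _ = τ.1 x
      rw [dif_neg x.2]
  rw [Nat.card_congr E, Ns_def]
  rcases Nat.eq_zero_or_pos k with rfl | hk
  · exact absurd i.2 (by omega)
  have hcard : Fintype.card {x : Fin k // x ≠ i'} = k - 1 := by
    simp [Fintype.card_subtype_compl]
  exact Ns_congr (Fintype.equivFinOfCardEq hcard) (Equiv.refl _)

theorem quadratic_lambda_vanishes (k : ℕ) (hk : 3 ≤ k) (α : Fin k → ℝ) :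
    ∑ m ∈ Finset.Icc 1 k, ((-1 : ℝ) ^ (m - 1) / m) *
      ∑ σ ∈ Finset.univ.filter (fun σ : Fin k → Fin m => Function.Surjective σ),
        ∑ j : Fin m, (∑ i ∈ Finset.univ.filter (fun i => σ i = j), α i) ^ 2 = 0 := by
  classical
  have step1 : ∀ (m : ℕ) (σ : Fin k → Fin m),
      ∑ j : Fin m, (∑ i ∈ univ.filter (fun i => σ i = j), α i)^2 =
      ∑ i : Fin k, ∑ i' ∈ univ.filter (fun i' => σ i' = σ i), α i * α i' := by
    intro m σ
    calc ∑ j : Fin m, (∑ i ∈ univ.filter (fun i => σ i = j), α i)^2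
        = ∑ j : Fin m, ∑ i ∈ univ.filter (fun i => σ i = j),
            ∑ i' ∈ univ.filter (fun i' => σ i' = σ i), α i * α i' := by
          apply Finset.sum_congr rfl; intro j _
          rw [sq, Finset.sum_mul_sum]
          apply Finset.sum_congr rfl; intro i hi
          simp only [mem_filter, mem_univ, true_and] at hi
          rw [hi]
      _ = _ := Finset.sum_fiberwise _ _ _
  have step2 : ∀ m : ℕ, ∑ σ ∈ univ.filter (fun σ : Fin k → Fin m => Surjective σ),
      ∑ i : Fin k, ∑ i' ∈ univ.filter (fun i' => σ i' = σ i), α i * α i'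
      = ∑ i : Fin k, ∑ i' : Fin k, (α i * α i') *
          ((univ.filter (fun σ : Fin k → Fin m => Surjective σ ∧ σ i' = σ i)).card : ℝ) := by
    intro m
    rw [Finset.sum_comm]
    apply Finset.sum_congr rfl; intro i _
    have h1 : ∀ σ : Fin k → Fin m, ∑ i' ∈ univ.filter (fun i' => σ i' = σ i), α i * α i'
        = ∑ i' : Fin k, if σ i' = σ i then α i * α i' else 0 := fun σ =>
      Finset.sum_filter _ _
    simp only [h1]
    rw [Finset.sum_comm]
    apply Finset.sum_congr rfl; intro i' _
    rw [← Finset.sum_filter, Finset.filter_filter, Finset.sum_const, nsmul_eq_mul, mul_comm]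
  have step3 : ∀ (m : ℕ) (i i' : Fin k),
      ((univ.filter (fun σ : Fin k → Fin m => Surjective σ ∧ σ i' = σ i)).card : ℕ)
        = if i' = i then Ns k m else Ns (k-1) m := by
    intro m i i'
    rw [← Fintype.card_subtype, ← Nat.card_eq_fintype_card]
    by_cases h : i' = i
    · subst h
      rw [if_pos rfl, Ns_def]
      exact Nat.card_congr (Equiv.subtypeEquivRight (by simp))
    · rw [if_neg h]
      exact card_pair_ne i i' (Ne.symm h)
  calc ∑ m ∈ Finset.Icc 1 k, ((-1 : ℝ) ^ (m - 1) / m) *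
      ∑ σ ∈ Finset.univ.filter (fun σ : Fin k → Fin m => Function.Surjective σ),
        ∑ j : Fin m, (∑ i ∈ Finset.univ.filter (fun i => σ i = j), α i) ^ 2
      = ∑ m ∈ Finset.Icc 1 k, ∑ i : Fin k, ∑ i' : Fin k, ((-1 : ℝ) ^ (m - 1) / m) *
          ((α i * α i') *
          ((univ.filter (fun σ : Fin k → Fin m => Surjective σ ∧ σ i' = σ i)).card : ℝ)) := by
        apply Finset.sum_congr rfl; intro m _
        rw [show (∑ σ ∈ Finset.univ.filter (fun σ : Fin k → Fin m => Function.Surjective σ),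
          ∑ j : Fin m, (∑ i ∈ Finset.univ.filter (fun i => σ i = j), α i) ^ 2) =
          ∑ i : Fin k, ∑ i' : Fin k, (α i * α i') *
          ((univ.filter (fun σ : Fin k → Fin m => Surjective σ ∧ σ i' = σ i)).card : ℝ) from
          (Finset.sum_congr rfl (fun σ _ => step1 m σ)).trans (step2 m)]
        rw [Finset.mul_sum]
        exact Finset.sum_congr rfl fun i _ => Finset.mul_sum _ _ _
    _ = ∑ i : Fin k, ∑ i' : Fin k, (α i * α i') *
          ∑ m ∈ Finset.Icc 1 k, ((-1 : ℝ) ^ (m - 1) / m) *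
          ((if i' = i then Ns k m else Ns (k-1) m : ℕ) : ℝ) := by
        rw [Finset.sum_comm]
        apply Finset.sum_congr rfl; intro i _
        rw [Finset.sum_comm]
        apply Finset.sum_congr rfl; intro i' _
        rw [Finset.mul_sum]
        apply Finset.sum_congr rfl; intro m _
        rw [step3 m i i']
        ring
    _ = 0 := by
        apply Finset.sum_eq_zero; intro i _
        apply Finset.sum_eq_zero; intro i' _
        by_cases h : i' = i
        · simp only [h, eq_self_iff_true, if_true]
          rw [Ns_alt (by omega) (le_refl k), mul_zero]
        · simp only [if_neg h]
          rw [Ns_alt (by omega : 2 ≤ k-1) (by omega : k-1 ≤ k), mul_zero]
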